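/- Let pᵢ(t) = aᵢ + t·vᵢ (i = 1,…,4) be four points moving along straight lines in the plane at unit speed (‖vᵢ‖ = 1). Then either the four points lie on a common circle or line at every time t, or the set of times t at which they lie on a common circle or line has at most 3 elements. -/

import Mathlib

noncomputable section

/-- Points of the Euclidean plane. -/
abbrev Pt := EuclideanSpace ℝ (Fin 2)

/-- Four points lie on a common circle or on a common line. -/
def OnCommonCircleOrLine (p : Fin 4 → Pt) : Prop :=
  (∃ c : Pt, ∃ ρ : ℝ, 0 < ρ ∧ ∀ i, dist (p i) c = ρ) ∨ Collinear ℝ (Set.range p)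

/-- Squared distance in coordinates. -/
lemma dist_sq_eq (x y : Pt) : dist x y ^ 2 = (x 0 - y 0) ^ 2 + (x 1 - y 1) ^ 2 := by
  rw [EuclideanSpace.dist_eq, Real.sq_sqrt (by positivity)]
  simp [Fin.sum_univ_two, Real.dist_eq, sq_abs]

/-- A convenient way to build a point of the plane. -/
def mkPt (u w : ℝ) : Pt := (WithLp.equiv 2 (Fin 2 → ℝ)).symm ![u, w]

@[simp] lemma mkPt_zero (u w : ℝ) : mkPt u w 0 = u := rfl
@[simp] lemma mkPt_one (u w : ℝ) : mkPt u w 1 = w := rfl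

lemma key (p : Fin 4 → Pt) :
    OnCommonCircleOrLine p ↔
      ∃ w : Fin 4 → ℝ, w ≠ 0 ∧
        ∀ i, w 0 * ((p i 0) ^ 2 + (p i 1) ^ 2) + w 1 * (p i 0) + w 2 * (p i 1) + w 3 = 0 := by
  constructor
  · rintro (⟨c, ρ, hρ, hd⟩ | hcol)
    · refine ⟨![1, -2 * c 0, -2 * c 1, (c 0) ^ 2 + (c 1) ^ 2 - ρ ^ 2], ?_, ?_⟩
      · intro h
        have := congrFun h 0
        simp at this
      · intro i
        have h2 : dist (p i) c ^ 2 = ρ ^ 2 := by rw [hd i]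
        rw [dist_sq_eq] at h2
        simp only [Matrix.cons_val_zero, Matrix.cons_val_one, Matrix.head_cons,
          Matrix.cons_val_two, Matrix.tail_cons, Matrix.cons_val_three]
        linear_combination h2
    · rw [collinear_iff_of_mem (Set.mem_range_self 0)] at hcol
      obtain ⟨d, hd⟩ := hcol
      by_cases hd0 : d 0 = 0 ∧ d 1 = 0
      · refine ⟨![0, 1, 0, -(p 0 0)], ?_, ?_⟩
        · intro h
          have := congrFun h 1
          simp at this
        · intro i
          obtain ⟨r, hr⟩ := hd (p i) (Set.mem_range_self i)
          have h0 : p i 0 = p 0 0 := by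
            rw [hr]
            simp [hd0.1]
          simp [h0]
      · refine ⟨![0, -(d 1), d 0, d 1 * p 0 0 - d 0 * p 0 1], ?_, ?_⟩
        · intro h
          have h1 := congrFun h 1
          have h2 := congrFun h 2
          simp at h1 h2
          exact hd0 ⟨h2, by linarith⟩
        · intro i
          obtain ⟨r, hr⟩ := hd (p i) (Set.mem_range_self i)
          have h0 : p i 0 = r * d 0 + p 0 0 := by rw [hr]; simp
          have h1 : p i 1 = r * d 1 + p 0 1 := by rw [hr]; simp
          simp only [Matrix.cons_val_zero, Matrix.cons_val_one, Matrix.head_cons,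
            Matrix.cons_val_two, Matrix.tail_cons, Matrix.cons_val_three, h0, h1]
          ring
  · rintro ⟨w, hw, he⟩
    by_cases hL : w 0 = 0
    · by_cases hBG : w 1 = 0 ∧ w 2 = 0
      · exfalso
        have h0 := he 0
        rw [hL, hBG.1, hBG.2] at h0
        simp at h0
        apply hw
        funext i
        fin_cases i <;> simp [hL, hBG.1, hBG.2, h0]
      · right
        rw [collinear_iff_of_mem (Set.mem_range_self 0)]
        refine ⟨mkPt (w 2) (-(w 1)), ?_⟩
        rintro q ⟨i, rfl⟩
        have hi := he i
        have h0 := he 0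
        rw [hL] at hi h0
        have hlin : w 1 * (p i 0 - p 0 0) + w 2 * (p i 1 - p 0 1) = 0 := by linarith
        by_cases hB : w 1 = 0
        · have hG : w 2 ≠ 0 := fun h => hBG ⟨hB, h⟩
          refine ⟨(p i 0 - p 0 0) / w 2, ?_⟩
          have hy : p i 1 = p 0 1 := by
            rw [hB] at hlin
            have := mul_eq_zero.1 (by linarith : w 2 * (p i 1 - p 0 1) = 0)
            rcases this with h | h
            · exact absurd h hG
            · linarith
          ext j
          fin_cases j <;>
            simp [PiLp.add_apply, PiLp.smul_apply, smul_eq_mul, hy, hB] <;>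
            field_simp <;> ring
        · refine ⟨-(p i 1 - p 0 1) / w 1, ?_⟩
          have hx : p i 0 - p 0 0 = -(w 2) * (p i 1 - p 0 1) / w 1 := by
            field_simp
            linarith
          ext j
          fin_cases j <;>
            simp [PiLp.add_apply, PiLp.smul_apply, smul_eq_mul, hx] <;>
            field_simp <;> first | linear_combination hlin | ring
    · set c : Pt := mkPt (-(w 1) / (2 * w 0)) (-(w 2) / (2 * w 0)) with hc
      have hK : ∀ i, dist (p i) c ^ 2 = dist (p 0) c ^ 2 := by
        intro i
        rw [dist_sq_eq, dist_sq_eq]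
        simp only [hc, mkPt_zero, mkPt_one]
        have hi := he i
        have h0 := he 0
        field_simp
        linear_combination (4 * w 0) * hi - (4 * w 0) * h0
      rcases eq_or_lt_of_le (dist_nonneg : (0:ℝ) ≤ dist (p 0) c) with h0 | h0
      · right
        have hsub : Set.range p ⊆ {c} := by
          rintro q ⟨i, rfl⟩
          have hi := hK i
          rw [← h0] at hi
          have : dist (p i) c = 0 := by nlinarith [dist_nonneg (x := p i) (y := c)]
          simp [dist_eq_zero.1 this]
        exact (collinear_singleton ℝ c).subset hsub
      · left
        refine ⟨c, dist (p 0) c, h0, fun i => ?_⟩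
        have hi := hK i
        nlinarith [dist_nonneg (x := p i) (y := c), dist_nonneg (x := p 0) (y := c)]

open Polynomial in
/-- The in-circle matrix at time `t` (with `t^2` subtracted from the first column). -/
def Mt (a v : Fin 4 → Pt) (t : ℝ) : Matrix (Fin 4) (Fin 4) ℝ :=
  Matrix.of fun i => ![(a i 0) ^ 2 + (a i 1) ^ 2 + 2 * t * (a i 0 * v i 0 + a i 1 * v i 1),
    a i 0 + t * v i 0, a i 1 + t * v i 1, 1]

open Polynomial in
/-- The in-circle matrix as a matrix of polynomials. -/
def Np (a v : Fin 4 → Pt) : Matrix (Fin 4) (Fin 4) ℝ[X] :=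
  Matrix.of fun i => ![C (2 * (a i 0 * v i 0 + a i 1 * v i 1)) * X + C ((a i 0) ^ 2 + (a i 1) ^ 2),
    C (v i 0) * X + C (a i 0), C (v i 1) * X + C (a i 1), 1]

lemma det_eval (a v : Fin 4 → Pt) (t : ℝ) :
    (Np a v).det.eval t = (Mt a v t).det := by
  have h := RingHom.map_det (Polynomial.evalRingHom t) (Np a v)
  have h2 : (Np a v).map (Polynomial.evalRingHom t) = Mt a v t := by
    ext i j
    fin_cases j <;> simp [Np, Mt] <;> ring
  rw [← h2]
  exact h

lemma deg_det (a v : Fin 4 → Pt) : (Np a v).det.natDegree ≤ 3 := by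
  rw [Polynomial.natDegree_le_iff_degree_le, Matrix.det_apply']
  refine (Polynomial.degree_sum_le _ _).trans ?_
  refine Finset.sup_le fun σ _ => ?_
  refine (Polynomial.degree_mul_le _ _).trans ?_
  have e0 : ∀ k, Polynomial.degree ((Np a v) k 0) ≤ 1 := fun k => by
    simp only [Np, Matrix.of_apply, Matrix.cons_val_zero]
    exact Polynomial.degree_linear_le
  have e1 : ∀ k, Polynomial.degree ((Np a v) k 1) ≤ 1 := fun k => by
    simp only [Np, Matrix.of_apply, Matrix.cons_val_one, Matrix.head_cons]
    exact Polynomial.degree_linear_le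
  have e2 : ∀ k, Polynomial.degree ((Np a v) k 2) ≤ 1 := fun k => by
    simp only [Np, Matrix.of_apply, Matrix.cons_val_two, Matrix.tail_cons, Matrix.head_cons]
    exact Polynomial.degree_linear_le
  have e3 : ∀ k, Polynomial.degree ((Np a v) k 3) ≤ 0 := fun k => by
    simp only [Np, Matrix.of_apply, Matrix.cons_val_three, Matrix.tail_cons, Matrix.head_cons]
    exact Polynomial.degree_one_le
  have hprod : Polynomial.degree (∏ i, (Np a v) (σ i) i) ≤ 3 := by
    refine (Polynomial.degree_prod_le _ _).trans ?_
    rw [Fin.sum_univ_four]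
    calc Polynomial.degree ((Np a v) (σ 0) 0) + Polynomial.degree ((Np a v) (σ 1) 1) +
          Polynomial.degree ((Np a v) (σ 2) 2) + Polynomial.degree ((Np a v) (σ 3) 3)
        ≤ 1 + 1 + 1 + 0 :=
          add_le_add (add_le_add (add_le_add (e0 _) (e1 _)) (e2 _)) (e3 _)
      _ ≤ 3 := by norm_num
  refine le_trans (add_le_add (Polynomial.degree_intCast_le (Equiv.Perm.sign σ : ℤ)) hprod) ?_
  norm_num

lemma key_t (a v : Fin 4 → Pt) (hv : ∀ i, ‖v i‖ = 1) (t : ℝ) :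
    OnCommonCircleOrLine (fun i => a i + t • v i) ↔ (Mt a v t).det = 0 := by
  have hv2 : ∀ i, (v i 0) ^ 2 + (v i 1) ^ 2 = 1 := by
    intro i
    have h : Real.sqrt (∑ j, ‖v i j‖ ^ 2) = 1 := by rw [← EuclideanSpace.norm_eq]; exact hv i
    have h2 : (∑ j, ‖v i j‖ ^ 2) = 1 := by
      have h3 := congrArg (· ^ 2) h
      simp only at h3
      rwa [Real.sq_sqrt (by positivity), one_pow] at h3
    simpa [Fin.sum_univ_two, Real.norm_eq_abs, sq_abs] using h2
  have hco : ∀ (i : Fin 4) (j : Fin 2), (a i + t • v i) j = a i j + t * v i j := by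
    intro i j
    simp [PiLp.add_apply, PiLp.smul_apply, smul_eq_mul]
  rw [← Matrix.exists_mulVec_eq_zero_iff, key]
  constructor
  · rintro ⟨w, hw, he⟩
    refine ⟨![w 0, w 1, w 2, w 3 + w 0 * t ^ 2], ?_, ?_⟩
    · intro h
      have h0 := congrFun h 0
      have h1 := congrFun h 1
      have h2 := congrFun h 2
      have h3 := congrFun h 3
      simp at h0 h1 h2 h3
      apply hw
      funext j
      fin_cases j <;> simp [h0, h1, h2]
      nlinarith [h3]
    · funext i
      have hei := he i
      simp only [hco] at hei
      simp only [Matrix.mulVec, dotProduct, Fin.sum_univ_four, Mt, Matrix.of_apply,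
        Matrix.cons_val_zero, Matrix.cons_val_one, Matrix.head_cons, Matrix.cons_val_two,
        Matrix.tail_cons, Matrix.cons_val_three, Pi.zero_apply]
      linear_combination hei - w 0 * t ^ 2 * hv2 i
  · rintro ⟨w, hw, he⟩
    refine ⟨![w 0, w 1, w 2, w 3 - w 0 * t ^ 2], ?_, ?_⟩
    · intro h
      have h0 := congrFun h 0
      have h1 := congrFun h 1
      have h2 := congrFun h 2
      have h3 := congrFun h 3
      simp at h0 h1 h2 h3
      apply hw
      funext j
      fin_cases j <;> simp [h0, h1, h2]
      nlinarith [h3]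
    · intro i
      have hei := congrFun he i
      simp only [Matrix.mulVec, dotProduct, Fin.sum_univ_four, Mt, Matrix.of_apply,
        Matrix.cons_val_zero, Matrix.cons_val_one, Matrix.head_cons, Matrix.cons_val_two,
        Matrix.tail_cons, Matrix.cons_val_three, Pi.zero_apply] at hei
      simp only [hco, Matrix.cons_val_zero, Matrix.cons_val_one, Matrix.head_cons,
        Matrix.cons_val_two, Matrix.tail_cons, Matrix.cons_val_three]
      linear_combination hei + w 0 * t ^ 2 * hv2 i

theorem stmt2 (a v : Fin 4 → Pt) (hv : ∀ i, ‖v i‖ = 1) :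
    (∀ t : ℝ, OnCommonCircleOrLine fun i => a i + t • v i) ∨
      ∃ S : Finset ℝ, S.card ≤ 3 ∧
        ∀ t : ℝ, (OnCommonCircleOrLine fun i => a i + t • v i) → t ∈ S := by
  by_cases hD : (Np a v).det = 0
  · left
    intro t
    rw [key_t a v hv t, ← det_eval, hD]
    simp
  · right
    refine ⟨(Np a v).det.roots.toFinset, ?_, ?_⟩
    · exact le_trans (Multiset.toFinset_card_le _)
        (le_trans (Polynomial.card_roots' _) (deg_det a v))
    · intro t ht
      rw [Multiset.mem_toFinset, Polynomial.mem_roots hD, Polynomial.IsRoot, det_eval]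
      exact (key_t a v hv t).1 ht
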